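/- Let P ∈ ℝ^{k×k} be symmetric positive definite and let H ∈ ℝ^{k×k} be symmetric with α·I ⪯ −H ⪯ β·I, where α ≤ β, 0 < β < ∞, and λ_min(P) > α⁻. Then the P-weighted matrix norm of I + P⁻¹H satisfies ‖I + P⁻¹H‖_P ≤ 1 − min{ α⁺/λ_max(P) − α⁻/λ_min(P) , 2 − β/λ_min(P) }. (This is the bound on the Jacobian dθ_{t|t}/dθ_{t|t−1} = I + P⁻¹H of the explicit score-driven update, Lemma 1, inequality (9).) -/

import Mathlib

open Matrix

/-- Smallest eigenvalue of a (Hermitian) real matrix; junk value 0 otherwise. -/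
noncomputable def lMin {k : ℕ} (A : Matrix (Fin k) (Fin k) ℝ) : ℝ :=
  letI := Classical.propDecidable A.IsHermitian
  if h : A.IsHermitian then ⨅ i, h.eigenvalues i else 0

/-- Largest eigenvalue of a (Hermitian) real matrix; junk value 0 otherwise. -/
noncomputable def lMax {k : ℕ} (A : Matrix (Fin k) (Fin k) ℝ) : ℝ :=
  letI := Classical.propDecidable A.IsHermitian
  if h : A.IsHermitian then ⨆ i, h.eigenvalues i else 0

/-- P-weighted squared vector norm `‖x‖_P² = xᵀ P x`. -/
def wq {k : ℕ} (P : Matrix (Fin k) (Fin k) ℝ) (x : Fin k → ℝ) : ℝ := x ⬝ᵥ P *ᵥ x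

/-- Induced P-weighted matrix norm `‖A‖_P = sup_{x ≠ 0} ‖Ax‖_P / ‖x‖_P`. -/
noncomputable def wMatNorm {k : ℕ} (P A : Matrix (Fin k) (Fin k) ℝ) : ℝ :=
  sSup {r : ℝ | ∃ x : Fin k → ℝ, x ≠ 0 ∧ r = Real.sqrt (wq P (A *ᵥ x)) / Real.sqrt (wq P x)}

/-- Symmetry of the bilinear form of a real Hermitian matrix. -/
lemma dot_symm {k : ℕ} (A : Matrix (Fin k) (Fin k) ℝ) (hA : A.IsHermitian) (x z : Fin k → ℝ) :
    x ⬝ᵥ A *ᵥ z = z ⬝ᵥ A *ᵥ x := by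
  rw [Matrix.dotProduct_mulVec, ← Matrix.mulVec_transpose, dotProduct_comm,
    ← Matrix.conjTranspose_eq_transpose_of_trivial, hA.eq]

lemma shift_psd_lower {k : ℕ} (A : Matrix (Fin k) (Fin k) ℝ) (hA : A.IsHermitian) (μ : ℝ)
    (hμ : ∀ i, μ ≤ hA.eigenvalues i) (v : Fin k → ℝ) :
    μ * (v ⬝ᵥ v) ≤ v ⬝ᵥ A *ᵥ v := by
  classical
  set U : Matrix (Fin k) (Fin k) ℝ :=
    (Matrix.IsHermitian.eigenvectorUnitary hA : Matrix (Fin k) (Fin k) ℝ) with hU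
  have hUU : U * star U = 1 :=
    Matrix.mem_unitaryGroup_iff.mp (Matrix.IsHermitian.eigenvectorUnitary hA).2
  have hdiag : (Matrix.diagonal (fun i => hA.eigenvalues i - μ)).PosSemidef :=
    Matrix.posSemidef_diagonal_iff.mpr fun i => sub_nonneg.2 (hμ i)
  have hd : Matrix.diagonal (fun i => hA.eigenvalues i - μ)
      = Matrix.diagonal (RCLike.ofReal ∘ hA.eigenvalues) - μ • (1 : Matrix (Fin k) (Fin k) ℝ) := by
    ext i j
    by_cases h : i = j <;> simp [Matrix.diagonal_apply, Matrix.one_apply, h]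
  have hkey : A - μ • (1 : Matrix (Fin k) (Fin k) ℝ)
      = U * Matrix.diagonal (fun i => hA.eigenvalues i - μ) * star U := by
    rw [hd, Matrix.mul_sub, Matrix.sub_mul]
    conv_lhs => rw [hA.spectral_theorem, Unitary.conjStarAlgAut_apply]
    congr 1
    rw [Matrix.mul_smul, mul_one, Matrix.smul_mul, hUU]
  have hpsd : (A - μ • (1 : Matrix (Fin k) (Fin k) ℝ)).PosSemidef := by
    rw [hkey, Matrix.star_eq_conjTranspose]
    exact hdiag.mul_mul_conjTranspose_same U
  have h2 := hpsd.dotProduct_mulVec_nonneg v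
  simp only [star_trivial, Matrix.sub_mulVec, Matrix.smul_mulVec, Matrix.one_mulVec,
    dotProduct_sub, dotProduct_smul, smul_eq_mul] at h2
  linarith

lemma shift_psd_upper {k : ℕ} (A : Matrix (Fin k) (Fin k) ℝ) (hA : A.IsHermitian) (μ : ℝ)
    (hμ : ∀ i, hA.eigenvalues i ≤ μ) (v : Fin k → ℝ) :
    v ⬝ᵥ A *ᵥ v ≤ μ * (v ⬝ᵥ v) := by
  classical
  set U : Matrix (Fin k) (Fin k) ℝ :=
    (Matrix.IsHermitian.eigenvectorUnitary hA : Matrix (Fin k) (Fin k) ℝ) with hU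
  have hUU : U * star U = 1 :=
    Matrix.mem_unitaryGroup_iff.mp (Matrix.IsHermitian.eigenvectorUnitary hA).2
  have hdiag : (Matrix.diagonal (fun i => μ - hA.eigenvalues i)).PosSemidef :=
    Matrix.posSemidef_diagonal_iff.mpr fun i => sub_nonneg.2 (hμ i)
  have hd : Matrix.diagonal (fun i => μ - hA.eigenvalues i)
      = μ • (1 : Matrix (Fin k) (Fin k) ℝ) - Matrix.diagonal (RCLike.ofReal ∘ hA.eigenvalues) := by
    ext i j
    by_cases h : i = j <;> simp [Matrix.diagonal_apply, Matrix.one_apply, h]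
  have hkey : μ • (1 : Matrix (Fin k) (Fin k) ℝ) - A
      = U * Matrix.diagonal (fun i => μ - hA.eigenvalues i) * star U := by
    rw [hd, Matrix.mul_sub, Matrix.sub_mul]
    conv_lhs => rw [hA.spectral_theorem, Unitary.conjStarAlgAut_apply]
    congr 1
    rw [Matrix.mul_smul, mul_one, Matrix.smul_mul, hUU]
  have hpsd : (μ • (1 : Matrix (Fin k) (Fin k) ℝ) - A).PosSemidef := by
    rw [hkey, Matrix.star_eq_conjTranspose]
    exact hdiag.mul_mul_conjTranspose_same U
  have h2 := hpsd.dotProduct_mulVec_nonneg v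
  simp only [star_trivial, Matrix.sub_mulVec, Matrix.smul_mulVec, Matrix.one_mulVec,
    dotProduct_sub, dotProduct_smul, smul_eq_mul] at h2
  linarith

/-- Lemma 1, inequality (9): stability of the explicit score-driven update.
If `P ≻ 0` is symmetric, `H` is symmetric with `α·I ⪯ −H ⪯ β·I`, `α ≤ β`, `0 < β`, and
`λ_min(P) > α⁻`, then
`‖I + P⁻¹H‖_P ≤ 1 − min{α⁺/λ_max(P) − α⁻/λ_min(P), 2 − β/λ_min(P)}`. -/
theorem esd_update_stability {k : ℕ} (P H : Matrix (Fin k) (Fin k) ℝ)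
    (hP : P.PosDef) (hH : H.IsHermitian) (α β : ℝ) (hαβ : α ≤ β) (hβ : 0 < β)
    (hlow : (-H - α • (1 : Matrix (Fin k) (Fin k) ℝ)).PosSemidef)
    (hup : (β • (1 : Matrix (Fin k) (Fin k) ℝ) - -H).PosSemidef)
    (hpen : max (-α) 0 < lMin P) :
    wMatNorm P (1 + P⁻¹ * H) ≤
      1 - min (max α 0 / lMax P - max (-α) 0 / lMin P) (2 - β / lMin P) := by
  classical
  rcases Nat.eq_zero_or_pos k with hk | hk
  · exfalso
    subst hk
    have h0 : lMin P = 0 := by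
      simp only [lMin, dif_pos hP.1]
      rw [iInf_of_isEmpty]
      exact Real.sInf_empty
    rw [h0] at hpen
    exact absurd hpen (not_lt.2 (le_max_right _ _))
  haveI : Nonempty (Fin k) := ⟨⟨0, hk⟩⟩
  have hmin : lMin P = ⨅ i, hP.1.eigenvalues i := by simp only [lMin, dif_pos hP.1]
  have hmax : lMax P = ⨆ i, hP.1.eigenvalues i := by simp only [lMax, dif_pos hP.1]
  set n := lMin P with hn
  set M := lMax P with hM
  clear_value n M
  have hev_lb : ∀ i, n ≤ hP.1.eigenvalues i := fun i => by
    rw [hmin]; exact ciInf_le (Set.Finite.bddBelow (Set.finite_range _)) i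
  have hev_ub : ∀ i, hP.1.eigenvalues i ≤ M := fun i => by
    rw [hmax]; exact le_ciSup (Set.Finite.bddAbove (Set.finite_range _)) i
  have hn_pos : 0 < n := lt_of_le_of_lt (le_max_right _ _) hpen
  have hnM : n ≤ M := le_trans (hev_lb (Classical.arbitrary _)) (hev_ub _)
  have hM_pos : 0 < M := lt_of_lt_of_le hn_pos hnM
  have L1 : ∀ v : Fin k → ℝ, n * (v ⬝ᵥ v) ≤ v ⬝ᵥ P *ᵥ v :=
    fun v => shift_psd_lower P hP.1 n hev_lb v
  have L2 : ∀ v : Fin k → ℝ, v ⬝ᵥ P *ᵥ v ≤ M * (v ⬝ᵥ v) :=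
    fun v => shift_psd_upper P hP.1 M hev_ub v
  have hvv : ∀ v : Fin k → ℝ, 0 ≤ v ⬝ᵥ v := fun v =>
    Finset.sum_nonneg fun i _ => mul_self_nonneg _
  have hPnn : ∀ v : Fin k → ℝ, 0 ≤ v ⬝ᵥ P *ᵥ v := fun v =>
    le_trans (mul_nonneg hn_pos.le (hvv v)) (L1 v)
  -- bounds on H's quadratic form
  have hHl : ∀ v : Fin k → ℝ, α * (v ⬝ᵥ v) ≤ -(v ⬝ᵥ H *ᵥ v) := by
    intro v
    have h2 := hlow.dotProduct_mulVec_nonneg v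
    simp only [star_trivial, Matrix.sub_mulVec, Matrix.neg_mulVec, Matrix.smul_mulVec,
      Matrix.one_mulVec, dotProduct_sub, dotProduct_neg, dotProduct_smul, smul_eq_mul] at h2
    linarith
  have hHu : ∀ v : Fin k → ℝ, -(v ⬝ᵥ H *ᵥ v) ≤ β * (v ⬝ᵥ v) := by
    intro v
    have h2 := hup.dotProduct_mulVec_nonneg v
    simp only [star_trivial, Matrix.sub_mulVec, Matrix.neg_mulVec, Matrix.smul_mulVec,
      Matrix.one_mulVec, dotProduct_sub, dotProduct_neg, dotProduct_smul, smul_eq_mul,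
      neg_neg] at h2
    linarith
  set c := 1 - min (max α 0 / M - max (-α) 0 / n) (2 - β / n) with hc
  clear_value c
  have hminle1 : min (max α 0 / M - max (-α) 0 / n) (2 - β / n) ≤ 1 := by
    rcases le_or_gt n β with h | h
    · have h1 : (1 : ℝ) ≤ β / n := (one_le_div hn_pos).2 h
      have := min_le_right (max α 0 / M - max (-α) 0 / n) (2 - β / n)
      linarith
    · have h1 : max α 0 ≤ M := max_le (by linarith) hM_pos.le
      have h2 : max α 0 / M ≤ 1 := (div_le_one hM_pos).2 h1
      have h3 : 0 ≤ max (-α) 0 / n := div_nonneg (le_max_right _ _) hn_pos.le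
      have := min_le_left (max α 0 / M - max (-α) 0 / n) (2 - β / n)
      linarith
  have hc0 : 0 ≤ c := by rw [hc]; linarith
  have h_low_c : max (-α) 0 / n - max α 0 / M ≤ c - 1 := by
    have := min_le_left (max α 0 / M - max (-α) 0 / n) (2 - β / n)
    rw [hc]; linarith
  have h_up_c : β / n ≤ c + 1 := by
    have := min_le_right (max α 0 / M - max (-α) 0 / n) (2 - β / n)
    rw [hc]; linarith
  -- two-sided bound on H vs (c∓1)P
  have hA1 : ∀ v : Fin k → ℝ, v ⬝ᵥ H *ᵥ v ≤ (c - 1) * (v ⬝ᵥ P *ᵥ v) := by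
    intro v
    rcases le_or_gt 0 α with h | h
    · have e1 : max α 0 = α := max_eq_left h
      have e2 : max (-α) 0 = 0 := max_eq_right (neg_nonpos.2 h)
      have hlc := h_low_c
      rw [e1, e2, zero_div] at hlc
      have hstep := mul_le_mul_of_nonneg_left (L2 v) (div_nonneg h hM_pos.le)
      have hstep2 : α / M * (M * (v ⬝ᵥ v)) = α * (v ⬝ᵥ v) := by
        rw [← mul_assoc, div_mul_cancel₀ α hM_pos.ne']
      have hmono := mul_le_mul_of_nonneg_right (by linarith : -(α / M) ≤ c - 1) (hPnn v)
      have hHv := hHl v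
      linarith [hstep, hstep2, hmono, hHv]
    · have e1 : max α 0 = 0 := max_eq_right h.le
      have e2 : max (-α) 0 = -α := max_eq_left (by linarith)
      have hlc := h_low_c
      rw [e1, e2, zero_div] at hlc
      have hstep := mul_le_mul_of_nonneg_left (L1 v) (div_nonneg (by linarith : (0:ℝ) ≤ -α) hn_pos.le)
      have hstep2 : -α / n * (n * (v ⬝ᵥ v)) = -α * (v ⬝ᵥ v) := by
        rw [← mul_assoc, div_mul_cancel₀ (-α) hn_pos.ne']
      have hmono := mul_le_mul_of_nonneg_right (by linarith : -α / n ≤ c - 1) (hPnn v)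
      have hHv := hHl v
      linarith [hstep, hstep2, hmono, hHv]
  have hA2 : ∀ v : Fin k → ℝ, -((c + 1) * (v ⬝ᵥ P *ᵥ v)) ≤ v ⬝ᵥ H *ᵥ v := by
    intro v
    have hstep := mul_le_mul_of_nonneg_left (L1 v) (div_nonneg hβ.le hn_pos.le)
    have hstep2 : β / n * (n * (v ⬝ᵥ v)) = β * (v ⬝ᵥ v) := by
      rw [← mul_assoc, div_mul_cancel₀ β hn_pos.ne']
    have hmono := mul_le_mul_of_nonneg_right h_up_c (hPnn v)
    have hHv := hHu v
    linarith [hstep, hstep2, hmono, hHv]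
  -- now bound the sup
  rw [wMatNorm]
  apply Real.sSup_le _ hc0
  rintro r ⟨x, hx, rfl⟩
  set z := (1 + P⁻¹ * H) *ᵥ x with hz
  have hdet : IsUnit P.det := hP.det_pos.ne'.isUnit
  have hPz : P *ᵥ z = P *ᵥ x + H *ᵥ x := by
    rw [hz, Matrix.mulVec_mulVec]
    have hPH : P * (1 + P⁻¹ * H) = P + H := by
      rw [mul_add, mul_one, ← mul_assoc, Matrix.mul_nonsing_inv P hdet, one_mul]
    rw [hPH, Matrix.add_mulVec]
  have hp_pos : 0 < x ⬝ᵥ P *ᵥ x := by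
    have := hP.dotProduct_mulVec_pos hx
    simpa using this
  have hq_nonneg : 0 ≤ z ⬝ᵥ P *ᵥ z := hPnn z
  have s1 : z ⬝ᵥ P *ᵥ x = x ⬝ᵥ P *ᵥ z := dot_symm P hP.1 z x
  have s2 : z ⬝ᵥ H *ᵥ x = x ⬝ᵥ H *ᵥ z := dot_symm H hH z x
  have hq' : x ⬝ᵥ P *ᵥ z + x ⬝ᵥ H *ᵥ z = z ⬝ᵥ P *ᵥ z := by
    rw [← s1, ← s2, ← dotProduct_add, ← hPz]
  have key : ∀ t : ℝ, 0 ≤ 2 * c * (x ⬝ᵥ P *ᵥ x) * (t * t) + 4 * (z ⬝ᵥ P *ᵥ z) * t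
      + 2 * c * (z ⬝ᵥ P *ᵥ z) := by
    intro t
    have E1 : (t • x - z) ⬝ᵥ P *ᵥ (t • x - z)
        = t * t * (x ⬝ᵥ P *ᵥ x) - 2 * t * (x ⬝ᵥ P *ᵥ z) + z ⬝ᵥ P *ᵥ z := by
      simp only [Matrix.mulVec_sub, Matrix.mulVec_smul, dotProduct_sub, sub_dotProduct,
        smul_dotProduct, dotProduct_smul, smul_eq_mul]
      rw [s1]; ring
    have E2 : (t • x + z) ⬝ᵥ P *ᵥ (t • x + z)
        = t * t * (x ⬝ᵥ P *ᵥ x) + 2 * t * (x ⬝ᵥ P *ᵥ z) + z ⬝ᵥ P *ᵥ z := by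
      simp only [Matrix.mulVec_add, Matrix.mulVec_smul, dotProduct_add, add_dotProduct,
        smul_dotProduct, dotProduct_smul, smul_eq_mul]
      rw [s1]; ring
    have F1 : (t • x - z) ⬝ᵥ H *ᵥ (t • x - z)
        = t * t * (x ⬝ᵥ H *ᵥ x) - 2 * t * (x ⬝ᵥ H *ᵥ z) + z ⬝ᵥ H *ᵥ z := by
      simp only [Matrix.mulVec_sub, Matrix.mulVec_smul, dotProduct_sub, sub_dotProduct,
        smul_dotProduct, dotProduct_smul, smul_eq_mul]
      rw [s2]; ring
    have F2 : (t • x + z) ⬝ᵥ H *ᵥ (t • x + z)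
        = t * t * (x ⬝ᵥ H *ᵥ x) + 2 * t * (x ⬝ᵥ H *ᵥ z) + z ⬝ᵥ H *ᵥ z := by
      simp only [Matrix.mulVec_add, Matrix.mulVec_smul, dotProduct_add, add_dotProduct,
        smul_dotProduct, dotProduct_smul, smul_eq_mul]
      rw [s2]; ring
    have h1 := hA1 (t • x - z)
    have h2 := hA2 (t • x + z)
    rw [E1, F1] at h1
    rw [E2, F2] at h2
    have hcomb : 0 ≤ 2 * c * (x ⬝ᵥ P *ᵥ x) * (t * t)
        + 4 * t * (x ⬝ᵥ P *ᵥ z + x ⬝ᵥ H *ᵥ z) + 2 * c * (z ⬝ᵥ P *ᵥ z) := by linarith [h1, h2]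
    rw [hq'] at hcomb
    linarith
  have hdisc := discrim_le_zero key
  rw [discrim] at hdisc
  have hq_le : z ⬝ᵥ P *ᵥ z ≤ c ^ 2 * (x ⬝ᵥ P *ᵥ x) := by
    rcases eq_or_lt_of_le hq_nonneg with h0 | h0
    · rw [← h0]; positivity
    · nlinarith [hdisc, h0]
  show Real.sqrt (wq P z) / Real.sqrt (wq P x) ≤ c
  rw [show wq P z = z ⬝ᵥ P *ᵥ z from rfl, show wq P x = x ⬝ᵥ P *ᵥ x from rfl]
  rw [div_le_iff₀ (Real.sqrt_pos.2 hp_pos)]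
  calc Real.sqrt (z ⬝ᵥ P *ᵥ z) ≤ Real.sqrt (c ^ 2 * (x ⬝ᵥ P *ᵥ x)) := Real.sqrt_le_sqrt hq_le
    _ = c * Real.sqrt (x ⬝ᵥ P *ᵥ x) := by
        rw [Real.sqrt_mul (sq_nonneg c), Real.sqrt_sq hc0]
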